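/- Let n ≥ 2 and let S be a multiset of n−1 positive integers in which every value occurs at most twice. Then there exist positive integers w_1,…,w_n such that the split multiset of the path with weights w_1,…,w_n equals S. (That is, if each split repeats at most twice, the split multiset can be realized by a path with freely chosen vertex weights.) -/

import Mathlib

/-- The multiset of completion times (nonempty prefix sums) of a list of job lengths
executed consecutively on one processor, starting at time 0. -/
def prefixSums (L : List ℕ) : Multiset ℕ :=
  ((List.range L.length).map (fun k => (L.take (k + 1)).sum) : List ℕ)

/-- A valid two-processor schedule of the multiset of jobs `J` for the multiset of
deadlines `D`: a partition of the jobs into two ordered sequences (one per processor,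
executed without idle time starting at time 0) such that the multiset of all
completion times equals `D`. -/
def ValidSchedule (J D : Multiset ℕ) : Prop :=
  ∃ L1 L2 : List ℕ, ((L1 : Multiset ℕ) + (L2 : Multiset ℕ) = J) ∧
    prefixSums L1 + prefixSums L2 = D

/-- The split multiset of the path whose vertices carry the weights listed in `w`:
the multiset of `min (Pℓ, W − Pℓ)` over all proper nonempty prefixes, where `Pℓ` is
the `ℓ`-th prefix sum and `W` the total weight. -/
def pathSplits (w : List ℕ) : Multiset ℕ :=
  ((List.range (w.length - 1)).map
    (fun k => min ((w.take (k + 1)).sum) (w.sum - (w.take (k + 1)).sum)) : List ℕ)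

/-- The list of successive differences of a list, relative to a starting value. -/
def diffsFrom : ℕ → List ℕ → List ℕ
  | _, [] => []
  | prev, a :: l => (a - prev) :: diffsFrom a l

lemma diffsFrom_length (p : ℕ) (l : List ℕ) : (diffsFrom p l).length = l.length := by
  induction l generalizing p with
  | nil => rfl
  | cons a t ih => simp [diffsFrom, ih]

lemma diffsFrom_pos (p : ℕ) (l : List ℕ) (h : List.Chain (· < ·) p l) :
    ∀ x ∈ diffsFrom p l, 0 < x := by
  induction l generalizing p with
  | nil => simp [diffsFrom]
  | cons a t ih =>
    replace h : List.IsChain _ (p :: a :: t) := h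
    rw [List.isChain_cons_cons] at h
    intro x hx
    simp only [diffsFrom, List.mem_cons] at hx
    rcases hx with hx | hx
    · omega
    · exact ih a h.2 x hx

lemma diffsFrom_take_sum (l : List ℕ) (p k : ℕ) (h : List.Chain (· ≤ ·) p l)
    (hk : k < l.length) :
    p + ((diffsFrom p l).take (k + 1)).sum = l.getD k 0 := by
  induction l generalizing p k with
  | nil => simp at hk
  | cons a t ih =>
    replace h : List.IsChain _ (p :: a :: t) := h
    rw [List.isChain_cons_cons] at h
    cases k with
    | zero =>
      simp only [diffsFrom, List.take_succ_cons, List.take_zero, List.sum_cons,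
        List.sum_nil, List.getD_cons_zero]
      omega
    | succ k =>
      have h2 := ih a k h.2 (by simpa using hk)
      simp only [diffsFrom, List.take_succ_cons, List.sum_cons, List.getD_cons_succ]
      omega

lemma diffsFrom_sum (l : List ℕ) (p : ℕ) (h : List.Chain (· ≤ ·) p l) (hne : l ≠ []) :
    p + (diffsFrom p l).sum = l.getD (l.length - 1) 0 := by
  have hl : 0 < l.length := List.length_pos_iff.2 hne
  have h1 := diffsFrom_take_sum l p (l.length - 1) h (by omega)
  rwa [show l.length - 1 + 1 = (diffsFrom p l).length by rw [diffsFrom_length]; omega,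
    List.take_length] at h1

/-- if `S` is a multiset of `n−1` positive integers (`n ≥ 2`) in which
every value occurs at most twice, then `S` is the split multiset of a path on `n`
vertices with freely chosen positive integer weights. -/
theorem stmt_15 (n : ℕ) (hn : 2 ≤ n) (S : Multiset ℕ)
    (hcard : Multiset.card S = n - 1)
    (hpos : ∀ x ∈ S, 0 < x)
    (hmult : ∀ x : ℕ, S.count x ≤ 2) :
    ∃ w : List ℕ, w.length = n ∧ (∀ x ∈ w, 0 < x) ∧ pathSplits w = S := by
  classical
  set T := S.sum with hT
  set W := 2 * T + 1 with hW
  set A : List ℕ := Multiset.sort S.dedup (· ≤ ·) with hA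
  set B : List ℕ := Multiset.sort (S - S.dedup) (· ≤ ·) with hB
  have hAS : (A : Multiset ℕ) = S.dedup := Multiset.sort_eq _ _
  have hBS : (B : Multiset ℕ) = S - S.dedup := Multiset.sort_eq _ _
  have hsplit : S.dedup + (S - S.dedup) = S := by
    rw [add_comm]; exact tsub_add_cancel_of_le (Multiset.dedup_le S)
  set p := A.length with hp
  set q := B.length with hq
  -- membership
  have memA : ∀ x ∈ A, x ∈ S := by
    intro x hx
    have : x ∈ (A : Multiset ℕ) := by exact_mod_cast hx
    rw [hAS, Multiset.mem_dedup] at this; exact this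
  have memB : ∀ x ∈ B, x ∈ S := by
    intro x hx
    have : x ∈ (B : Multiset ℕ) := by exact_mod_cast hx
    rw [hBS] at this
    exact Multiset.mem_of_le (tsub_le_self) this
  have leT : ∀ x ∈ S, x ≤ T :=
    fun x hx => Multiset.single_le_sum (fun y _ => Nat.zero_le y) x hx
  -- sortedness
  have sortedA : A.Pairwise (· < ·) := by
    refine ((Multiset.pairwise_sort _ _).sortedLE.sortedLT_of_nodup ?_).pairwise
    rw [← Multiset.coe_nodup, hAS]; exact Multiset.nodup_dedup S
  have nodupB : (S - S.dedup).Nodup := by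
    rw [Multiset.nodup_iff_count_le_one]
    intro a
    rw [Multiset.count_sub, Multiset.count_dedup]
    by_cases ha : a ∈ S
    · have h1 := hmult a
      simp [ha]; omega
    · simp [ha, Multiset.count_eq_zero_of_notMem ha]
  have sortedB : B.Pairwise (· < ·) := by
    refine ((Multiset.pairwise_sort _ _).sortedLE.sortedLT_of_nodup ?_).pairwise
    rw [← Multiset.coe_nodup, hBS]; exact nodupB
  have chainA : List.Chain (· < ·) 0 A := by
    show List.IsChain (· < ·) (0 :: _)
    rw [List.isChain_iff_pairwise, List.pairwise_cons]
    exact ⟨fun b hb => hpos b (memA b hb), sortedA⟩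
  have chainB : List.Chain (· < ·) 0 B := by
    show List.IsChain (· < ·) (0 :: _)
    rw [List.isChain_iff_pairwise, List.pairwise_cons]
    exact ⟨fun b hb => hpos b (memB b hb), sortedB⟩
  have chainA' : List.Chain (· ≤ ·) 0 A := List.IsChain.imp (fun _ _ h => le_of_lt h) chainA
  have chainB' : List.Chain (· ≤ ·) 0 B := List.IsChain.imp (fun _ _ h => le_of_lt h) chainB
  -- cardinalities
  have hpq : p + q = n - 1 := by
    have : Multiset.card (A : Multiset ℕ) + Multiset.card (B : Multiset ℕ)
        = Multiset.card S := by
      rw [hAS, hBS, ← Multiset.card_add, hsplit]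
    simpa [Multiset.coe_card, hcard] using this
  have hS0 : S ≠ 0 := by
    intro h; rw [h] at hcard; simp at hcard; omega
  have hp1 : 1 ≤ p := by
    by_contra h
    have hA0 : A = [] := List.length_eq_zero_iff.1 (by omega)
    have : S.dedup = 0 := by rw [← hAS, hA0]; rfl
    exact hS0 (Multiset.dedup_eq_zero.1 this)
  -- the extreme elements
  set aM := A.getD (p - 1) 0 with haM
  set bM := B.getD (q - 1) 0 with hbM
  have haMmem : aM ∈ A := by
    rw [haM, List.getD_eq_getElem A 0 (by omega)]
    exact List.getElem_mem _
  have haMT : aM ≤ S.dedup.sum := by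
    refine Multiset.single_le_sum (fun y _ => Nat.zero_le y) _ ?_
    rw [← hAS]; exact_mod_cast haMmem
  have hbMT : bM ≤ (S - S.dedup).sum := by
    rcases Nat.eq_zero_or_pos q with hq0 | hq0
    · have : B = [] := List.length_eq_zero_iff.1 hq0
      simp [hbM, this]
    · have hmem : bM ∈ B := by
        rw [hbM, List.getD_eq_getElem B 0 (by omega)]
        exact List.getElem_mem _
      refine Multiset.single_le_sum (fun y _ => Nat.zero_le y) _ ?_
      rw [← hBS]; exact_mod_cast hmem
  have habT : aM + bM ≤ T := by
    have h1 := congrArg Multiset.sum hsplit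
    rw [Multiset.sum_add] at h1
    rw [hT]
    omega
  -- the weight list
  set L := diffsFrom 0 A with hL
  set R := diffsFrom 0 B with hR
  set m := W - aM - bM with hm
  set w : List ℕ := L ++ m :: R.reverse with hw
  have hLlen : L.length = p := diffsFrom_length 0 A
  have hRlen : R.length = q := diffsFrom_length 0 B
  have hLsum : L.sum = aM := by
    have h1 := diffsFrom_sum A 0 chainA' (List.length_pos_iff.mp (by omega))
    rw [zero_add] at h1
    rw [hL, haM, hp]
    exact h1
  have hRsum : R.sum = bM := by
    rcases Nat.eq_zero_or_pos q with hq0 | hq0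
    · have hB0 : B = [] := List.length_eq_zero_iff.1 hq0
      simp [hR, hbM, hB0, diffsFrom]
    · have h1 := diffsFrom_sum B 0 chainB' (List.length_pos_iff.mp (by omega))
      rw [zero_add] at h1
      rw [hR, hbM, hq]
      exact h1
  have hwlen : w.length = p + 1 + q := by
    simp [hw, hLlen, hRlen]; omega
  have hwsum : w.sum = W := by
    rw [hw, List.sum_append, List.sum_cons, List.sum_reverse, hLsum, hRsum, hm, hW]
    omega
  -- prefix sums of w
  have getA : ∀ k < p, A.getD k 0 ∈ S := by
    intro k hk
    rw [List.getD_eq_getElem A 0 (by omega)]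
    exact memA _ (List.getElem_mem _)
  have getB : ∀ k < q, B.getD k 0 ∈ S := by
    intro k hk
    rw [List.getD_eq_getElem B 0 (by omega)]
    exact memB _ (List.getElem_mem _)
  have hP1 : ∀ k < p, (w.take (k + 1)).sum = A.getD k 0 := by
    intro k hk
    rw [hw, List.take_append_of_le_length (by omega)]
    have := diffsFrom_take_sum A 0 k chainA' (by omega)
    simpa using this
  have hP2 : ∀ i < q, (w.take (p + i + 1)).sum = W - B.getD (q - 1 - i) 0 := by
    intro i hi
    have htake : w.take (p + i + 1) = L ++ m :: R.reverse.take i := by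
      rw [hw, List.take_append, hLlen,
        List.take_of_length_le (by omega),
        show p + i + 1 - p = i + 1 by omega, List.take_succ_cons]
    have hrev : R.reverse.take i = (R.drop (q - i)).reverse := by
      rw [List.take_reverse, hRlen]
    have hdropsum : (R.take (q - i)).sum + (R.drop (q - i)).sum = R.sum :=
      List.sum_take_add_sum_drop R (q - i)
    have htk : (R.take (q - i)).sum = B.getD (q - 1 - i) 0 := by
      have h1 := diffsFrom_take_sum B 0 (q - 1 - i) chainB' (by omega)
      rw [show q - 1 - i + 1 = q - i by omega] at h1
      simpa using h1
    rw [hRsum] at hdropsum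
    have hle : B.getD (q - 1 - i) 0 ≤ bM := by omega
    rw [htake, List.sum_append, List.sum_cons, hLsum, hrev, List.sum_reverse]
    have hds : (List.drop (q - i) R).sum = bM - B.getD (q - 1 - i) 0 := by omega
    rw [hds, hm, hW]
    omega
  -- compute pathSplits
  set f : ℕ → ℕ := fun k => min ((w.take (k + 1)).sum) (w.sum - (w.take (k + 1)).sum)
    with hf
  have hps : pathSplits w = ((List.range (p + q)).map f : List ℕ) := by
    have hlen : w.length - 1 = p + q := by omega
    unfold pathSplits
    rw [hlen]
  have claim1 : (List.range p).map f = A := by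
    apply List.ext_get (by simp [hp])
    intro k h1 h2
    simp only [List.get_eq_getElem, List.getElem_map, List.getElem_range]
    have hk : k < p := by simpa using h1
    have hAk : A.getD k 0 ≤ T := leT _ (getA k hk)
    rw [hf]
    simp only []
    rw [hwsum, hP1 k hk, ← List.getD_eq_getElem A 0 (by omega)]
    omega
  have claim2 : (List.range q).map (fun i => f (p + i)) = B.reverse := by
    apply List.ext_get (by simp [hq])
    intro i h1 h2
    simp only [List.get_eq_getElem, List.getElem_map, List.getElem_range]
    have hi : i < q := by simpa using h1
    have hBi : B.getD (q - 1 - i) 0 ≤ T := leT _ (getB _ (by omega))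
    have hrev2 : B.reverse[i]'(by simpa using h2) = B.getD (q - 1 - i) 0 := by
      rw [List.getElem_reverse]
      rw [List.getD_eq_getElem B 0 (by omega)]
    rw [hf]
    simp only []
    rw [hwsum, hP2 i hi, hrev2]
    omega
  have : pathSplits w = S := by
    rw [hps, List.range_add, List.map_append, List.map_map]
    have : (List.map (f ∘ fun x => p + x) (List.range q)) = B.reverse := by
      rw [← claim2]; rfl
    rw [this, claim1, ← Multiset.coe_add, Multiset.coe_reverse, hAS, hBS, hsplit]
  refine ⟨w, by omega, ?_, this⟩
  intro x hx
  rw [hw] at hx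
  rcases List.mem_append.1 hx with hx | hx
  · exact diffsFrom_pos 0 A chainA x hx
  · rcases List.mem_cons.1 hx with hx | hx
    · rw [hx, hm]; omega
    · exact diffsFrom_pos 0 B chainB x (List.mem_reverse.1 hx)
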